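/- For every label k and every non-decreasing divergent function f : ℕ → ℕ, the probability that a uniformly random labelling in G^{N,f(N)} decomposes as a k-join tends to 0 as N → ∞. Specifically, this probability is bounded above by Σ_{j=1}^{⌊N/2⌋} C(N,j) (1/f(N))^{j(N-j)}, which tends to 0. -/

import Mathlib

open Filter Finset
open scoped Classical

/-- Defining pairs: unordered pairs of distinct vertices of `Fin N`. -/
abbrev DefPair (N : ℕ) := {p : Sym2 (Fin N) // ¬ p.IsDiag}

/-- Edge-labellings of the complete graph on `N` vertices with `M` labels. -/
abbrev Labelling (N M : ℕ) := DefPair N → Fin M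

/-- `Γ` is a `k`-join: the vertices split into two nonempty parts such that every
pair with one vertex in each part carries the label (with index) `k`. -/
def IsJoin {N M : ℕ} (k : ℕ) (Γ : Labelling N M) : Prop :=
  ∃ S : Finset (Fin N), S.Nonempty ∧ Sᶜ.Nonempty ∧
    ∀ a b : Fin N, a ∈ S → b ∉ S →
      ∀ p : DefPair N, a ∈ p.1 → b ∈ p.1 → (Γ p : ℕ) = k

/-- Labellings fixed (with value index `k`) on a set `A` of pairs. -/
lemma aux_card_fixed {N M : ℕ} (k : ℕ) (A : Finset (DefPair N)) :
    (univ.filter fun Γ : Labelling N M => ∀ p ∈ A, (Γ p : ℕ) = k).card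
      ≤ M ^ (Fintype.card (DefPair N) - A.card) := by
  classical
  have h : (univ.filter fun Γ : Labelling N M => ∀ p ∈ A, (Γ p : ℕ) = k).card
      ≤ (univ : Finset ({p : DefPair N // p ∉ A} → Fin M)).card := by
    apply Finset.card_le_card_of_injOn (fun Γ q => Γ q.1)
    · intro _ _; exact mem_univ _
    · intro Γ₁ h1 Γ₂ h2 hEq
      simp only [coe_filter, Set.mem_setOf_eq, mem_univ, true_and] at h1 h2
      funext p
      by_cases hp : p ∈ A
      · exact Fin.ext ((h1 p hp).trans (h2 p hp).symm)
      · exact congrFun hEq ⟨p, hp⟩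
  calc (univ.filter fun Γ : Labelling N M => ∀ p ∈ A, (Γ p : ℕ) = k).card
      ≤ (univ : Finset ({p : DefPair N // p ∉ A} → Fin M)).card := h
    _ = M ^ (Fintype.card (DefPair N) - A.card) := by
        rw [Finset.card_univ, Fintype.card_fun, Fintype.card_fin,
          Fintype.card_subtype_compl, Fintype.card_coe]

def crossPairs {N : ℕ} (S : Finset (Fin N)) : Finset (DefPair N) :=
  univ.filter fun p => ∃ a ∈ S, ∃ b ∈ Sᶜ, a ∈ p.1 ∧ b ∈ p.1

lemma card_crossPairs {N : ℕ} (S : Finset (Fin N)) :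
    (crossPairs S).card = S.card * (N - S.card) := by
  classical
  have key : (S ×ˢ Sᶜ).card = (crossPairs S).card := by
    apply Finset.card_bij (fun ab hab => (⟨s(ab.1, ab.2), by
      have h := Finset.mem_product.mp hab
      simp only [Sym2.isDiag_iff_proj_eq]
      exact fun hd => (Finset.mem_compl.mp h.2) (hd ▸ h.1)⟩ : DefPair N))
    · intro ab hab
      have h := Finset.mem_product.mp hab
      simp only [crossPairs, mem_filter, mem_univ, true_and]
      exact ⟨ab.1, h.1, ab.2, h.2, Sym2.mem_mk_left _ _, Sym2.mem_mk_right _ _⟩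
    · intro ab hab ab' hab' hEq
      have h := Finset.mem_product.mp hab
      have h' := Finset.mem_product.mp hab'
      have : s(ab.1, ab.2) = s(ab'.1, ab'.2) := congrArg Subtype.val hEq
      rw [Sym2.eq_iff] at this
      rcases this with ⟨h1, h2⟩ | ⟨h1, h2⟩
      · exact Prod.ext h1 h2
      · exact absurd (h1 ▸ h.1) (Finset.mem_compl.mp h'.2)
    · intro p hp
      simp only [crossPairs, mem_filter, mem_univ, true_and] at hp
      obtain ⟨a, ha, b, hb, hap, hbp⟩ := hp
      have hab : a ≠ b := fun h => (Finset.mem_compl.mp hb) (h ▸ ha)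
      have hps : p.1 = s(a, b) := (Sym2.mem_and_mem_iff hab).mp ⟨hap, hbp⟩
      exact ⟨(a, b), Finset.mem_product.mpr ⟨ha, hb⟩, Subtype.ext hps.symm⟩
  rw [← key, Finset.card_product, Finset.card_compl, Fintype.card_fin]

lemma e_le_P (N j : ℕ) (hj : j ≤ N) : j * (N - j) ≤ Fintype.card (DefPair N) := by
  classical
  obtain ⟨S, -, hScard⟩ := Finset.exists_subset_card_eq
    (s := (univ : Finset (Fin N))) (n := j) (by simpa using hj)
  calc j * (N - j) = (crossPairs S).card := by rw [card_crossPairs, hScard]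
    _ ≤ Fintype.card (DefPair N) := by
        simpa using Finset.card_le_univ (crossPairs S)

lemma exp_ge (N j : ℕ) (h1 : 1 ≤ j) (h2 : j ≤ N / 2) : N - 1 ≤ j * (N - j) := by
  rcases eq_or_lt_of_le h1 with h | h
  · rw [← h, one_mul]
  · have hj2 : 2 ≤ j := h
    have hm : 2 ≤ N - j := by omega
    have hmul := Nat.add_le_mul hj2 hm
    calc N - 1 ≤ j + (N - j) := by omega
      _ ≤ j * (N - j) := hmul

lemma key_bound (N M k : ℕ) (hM : 1 ≤ M) :
    ((univ.filter fun Γ : Labelling N M => IsJoin k Γ).card : ℝ) /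
        (Fintype.card (Labelling N M) : ℝ) ≤
      ∑ j ∈ Icc 1 (N / 2), (N.choose j : ℝ) * (1 / (M : ℝ)) ^ (j * (N - j)) := by
  classical
  set P := Fintype.card (DefPair N) with hP
  have hcardL : Fintype.card (Labelling N M) = M ^ P := by
    rw [Fintype.card_fun, Fintype.card_fin]
  set B : Finset (Finset (Fin N)) :=
    univ.filter fun S => 1 ≤ S.card ∧ S.card ≤ N / 2 with hB
  have hnat : (univ.filter fun Γ : Labelling N M => IsJoin k Γ).card ≤
      ∑ j ∈ Icc 1 (N / 2), N.choose j * M ^ (P - j * (N - j)) := by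
    have hsub : (univ.filter fun Γ : Labelling N M => IsJoin k Γ) ⊆
        B.biUnion fun S =>
          univ.filter fun Γ : Labelling N M => ∀ p ∈ crossPairs S, (Γ p : ℕ) = k := by
      intro Γ hΓ
      rw [mem_filter] at hΓ
      obtain ⟨-, S, hS, hSc, hcr⟩ := hΓ
      rw [Finset.mem_biUnion]
      have hSN : S.card ≤ N := by simpa using Finset.card_le_univ S
      by_cases hle : S.card ≤ N / 2
      · refine ⟨S, ?_, ?_⟩
        · simp only [hB, mem_filter, mem_univ, true_and]
          exact ⟨hS.card_pos, hle⟩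
        · simp only [mem_filter, mem_univ, true_and]
          intro p hp
          simp only [crossPairs, mem_filter, mem_univ, true_and] at hp
          obtain ⟨a, ha, b, hb, hap, hbp⟩ := hp
          exact hcr a b ha (Finset.mem_compl.mp hb) p hap hbp
      · refine ⟨Sᶜ, ?_, ?_⟩
        · have h1 : Sᶜ.card = N - S.card := by
            rw [Finset.card_compl, Fintype.card_fin]
          have h2 := hSc.card_pos
          simp only [hB, mem_filter, mem_univ, true_and]
          omega
        · simp only [mem_filter, mem_univ, true_and]
          intro p hp
          simp only [crossPairs, mem_filter, mem_univ, true_and, compl_compl] at hp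
          obtain ⟨a, ha, b, hb, hap, hbp⟩ := hp
          exact hcr b a hb (Finset.mem_compl.mp ha) p hbp hap
    have h1 : (univ.filter fun Γ : Labelling N M => IsJoin k Γ).card ≤
        ∑ S ∈ B,
          (univ.filter fun Γ : Labelling N M => ∀ p ∈ crossPairs S, (Γ p : ℕ) = k).card :=
      le_trans (Finset.card_le_card hsub) Finset.card_biUnion_le
    have h2 : ∀ S ∈ B,
        (univ.filter fun Γ : Labelling N M => ∀ p ∈ crossPairs S, (Γ p : ℕ) = k).card
          ≤ M ^ (P - S.card * (N - S.card)) := by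
      intro S _
      have := aux_card_fixed (N := N) (M := M) k (crossPairs S)
      rwa [card_crossPairs, ← hP] at this
    have h3 : ∑ S ∈ B, M ^ (P - S.card * (N - S.card)) =
        ∑ j ∈ Icc 1 (N / 2), N.choose j * M ^ (P - j * (N - j)) := by
      rw [← Finset.sum_fiberwise_of_maps_to (g := Finset.card) (t := Icc 1 (N / 2))
        (fun S hS => by
          simp only [hB, mem_filter, mem_univ, true_and] at hS
          simp only [mem_Icc]; exact hS)]
      refine Finset.sum_congr rfl fun j hj => ?_
      have hfil : B.filter (fun S => S.card = j) = Finset.powersetCard j univ := by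
        ext S
        simp only [hB, mem_filter, mem_univ, true_and, Finset.mem_powersetCard_univ,
          mem_Icc] at hj ⊢
        constructor
        · rintro ⟨-, h⟩; exact h
        · rintro rfl; exact ⟨⟨hj.1, hj.2⟩, rfl⟩
      calc ∑ S ∈ B.filter (fun S => S.card = j), M ^ (P - S.card * (N - S.card))
          = ∑ _S ∈ Finset.powersetCard j univ, M ^ (P - j * (N - j)) :=
            Finset.sum_congr hfil (fun S hS => by
              rw [Finset.mem_powersetCard_univ] at hS
              rw [hS])
        _ = N.choose j * M ^ (P - j * (N - j)) := by
            rw [Finset.sum_const, Finset.card_powersetCard, Finset.card_univ,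
              Fintype.card_fin, smul_eq_mul]
    calc (univ.filter fun Γ : Labelling N M => IsJoin k Γ).card
        ≤ ∑ S ∈ B,
          (univ.filter fun Γ : Labelling N M => ∀ p ∈ crossPairs S, (Γ p : ℕ) = k).card := h1
      _ ≤ ∑ S ∈ B, M ^ (P - S.card * (N - S.card)) := Finset.sum_le_sum h2
      _ = _ := h3
  -- real arithmetic
  have hM0 : (0 : ℝ) < (M : ℝ) := by exact_mod_cast hM
  have hMP : (0 : ℝ) < (M : ℝ) ^ P := by positivity
  rw [hcardL, Nat.cast_pow, div_le_iff₀ hMP]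
  calc ((univ.filter fun Γ : Labelling N M => IsJoin k Γ).card : ℝ)
      ≤ ((∑ j ∈ Icc 1 (N / 2), N.choose j * M ^ (P - j * (N - j)) : ℕ) : ℝ) := by
        exact_mod_cast hnat
    _ = ∑ j ∈ Icc 1 (N / 2), (N.choose j : ℝ) * (M : ℝ) ^ (P - j * (N - j)) := by
        push_cast; ring
    _ = (∑ j ∈ Icc 1 (N / 2), (N.choose j : ℝ) * (1 / (M : ℝ)) ^ (j * (N - j))) *
          (M : ℝ) ^ P := by
        rw [Finset.sum_mul]
        refine Finset.sum_congr rfl fun j hj => ?_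
        rw [mem_Icc] at hj
        have he : j * (N - j) ≤ P := e_le_P N j (by omega)
        rw [pow_sub₀ _ (ne_of_gt hM0) he, one_div, inv_pow]
        ring

lemma bound_tendsto (f : ℕ → ℕ) (hdiv : Tendsto f atTop atTop) :
    Tendsto (fun N : ℕ =>
        ∑ j ∈ Icc 1 (N / 2), (N.choose j : ℝ) * (1 / (f N : ℝ)) ^ (j * (N - j)))
      atTop (nhds 0) := by
  have hg : Tendsto (fun N : ℕ => 5 * ((N : ℝ) * (2 / 5) ^ N)) atTop (nhds 0) := by
    have := (tendsto_self_mul_const_pow_of_lt_one (r := (2 : ℝ) / 5)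
      (by norm_num) (by norm_num)).const_mul (5 : ℝ)
    simpa using this
  have hev : ∀ᶠ N in atTop, (5 : ℕ) ≤ f N := hdiv.eventually_ge_atTop 5
  apply squeeze_zero'
    (Eventually.of_forall fun N => Finset.sum_nonneg fun j _ => by positivity) ?_ hg
  filter_upwards [hev] with N hf5
  have hf5R : (5 : ℝ) ≤ (f N : ℝ) := by exact_mod_cast hf5
  have hfpos : (0 : ℝ) < (f N : ℝ) := by linarith
  have hterm : ∀ j ∈ Icc 1 (N / 2),
      (N.choose j : ℝ) * (1 / (f N : ℝ)) ^ (j * (N - j))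
        ≤ (2 : ℝ) ^ N * (1 / 5 : ℝ) ^ (N - 1) := by
    intro j hj
    rw [mem_Icc] at hj
    have hcb : (N.choose j : ℝ) ≤ (2 : ℝ) ^ N := by
      have h1 : N.choose j ≤ 2 ^ N := by
        calc N.choose j ≤ ∑ i ∈ Finset.range (N + 1), N.choose i :=
              Finset.single_le_sum (fun i _ => Nat.zero_le _)
                (Finset.mem_range.mpr (by omega))
          _ = 2 ^ N := Nat.sum_range_choose N
      exact_mod_cast h1
    have hpb : (1 / (f N : ℝ)) ^ (j * (N - j)) ≤ (1 / 5 : ℝ) ^ (N - 1) := by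
      calc (1 / (f N : ℝ)) ^ (j * (N - j)) ≤ (1 / (f N : ℝ)) ^ (N - 1) := by
            apply pow_le_pow_of_le_one (by positivity)
            · rw [div_le_one hfpos]; linarith
            · exact exp_ge N j hj.1 hj.2
        _ ≤ (1 / 5 : ℝ) ^ (N - 1) := by
            apply pow_le_pow_left₀ (by positivity)
            rw [div_le_div_iff₀ hfpos (by norm_num)]
            linarith
    exact mul_le_mul hcb hpb (by positivity) (by positivity)
  calc ∑ j ∈ Icc 1 (N / 2), (N.choose j : ℝ) * (1 / (f N : ℝ)) ^ (j * (N - j))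
      ≤ ∑ _j ∈ Icc 1 (N / 2), (2 : ℝ) ^ N * (1 / 5 : ℝ) ^ (N - 1) :=
        Finset.sum_le_sum hterm
    _ = ((N / 2 : ℕ) : ℝ) * ((2 : ℝ) ^ N * (1 / 5 : ℝ) ^ (N - 1)) := by
        rw [Finset.sum_const, Nat.card_Icc, nsmul_eq_mul]
        norm_num
    _ ≤ (N : ℝ) * ((2 : ℝ) ^ N * (1 / 5 : ℝ) ^ (N - 1)) := by
        apply mul_le_mul_of_nonneg_right _ (by positivity)
        exact_mod_cast Nat.div_le_self N 2
    _ = 5 * ((N : ℝ) * (2 / 5) ^ N) := by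
        cases N with
        | zero => simp
        | succ n =>
          have h1 : n + 1 - 1 = n := rfl
          rw [h1, div_pow]
          push_cast
          field_simp
          rw [one_pow, mul_one, ← pow_succ, div_pow, mul_div_cancel₀ _ (by positivity : (5:ℝ) ^ (n + 1) ≠ 0)]

/-- For every label `k` and non-decreasing divergent `f`, the probability that a random
labelling in `𝒢^{N,f(N)}` is a `k`-join is at most
`Σ_{j=1}^{⌊N/2⌋} C(N,j) (1/f(N))^{j(N-j)}`, and it tends to `0` as `N → ∞`. -/
theorem join_uniformly_small (k : ℕ) (f : ℕ → ℕ) (hmono : Monotone f)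
    (hdiv : Tendsto f atTop atTop) :
    (∀ N : ℕ,
      ((Finset.univ.filter fun Γ : Labelling N (f N) => IsJoin k Γ).card : ℝ) /
          (Fintype.card (Labelling N (f N)) : ℝ) ≤
        ∑ j ∈ Finset.Icc 1 (N / 2), (N.choose j : ℝ) * (1 / (f N : ℝ)) ^ (j * (N - j))) ∧
    Tendsto (fun N =>
        ((Finset.univ.filter fun Γ : Labelling N (f N) => IsJoin k Γ).card : ℝ) /
          (Fintype.card (Labelling N (f N)) : ℝ)) atTop (nhds 0) := by
  classical
  have key : ∀ N : ℕ,
      ((Finset.univ.filter fun Γ : Labelling N (f N) => IsJoin k Γ).card : ℝ) /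
          (Fintype.card (Labelling N (f N)) : ℝ) ≤
        ∑ j ∈ Finset.Icc 1 (N / 2), (N.choose j : ℝ) * (1 / (f N : ℝ)) ^ (j * (N - j)) := by
    intro N
    by_cases hM : 1 ≤ f N
    · exact key_bound N (f N) k hM
    · have hf0 : f N = 0 := by omega
      have hempty : (Finset.univ.filter fun Γ : Labelling N (f N) => IsJoin k Γ) = ∅ := by
        rw [Finset.eq_empty_iff_forall_notMem]
        intro Γ hΓ
        rw [mem_filter] at hΓ
        obtain ⟨-, S, hS, hSc, -⟩ := hΓ
        obtain ⟨a, ha⟩ := hS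
        obtain ⟨b, hb⟩ := hSc
        have hab : a ≠ b := fun h => (Finset.mem_compl.mp hb) (h ▸ ha)
        have hlt := (Γ ⟨s(a, b), by
          simp only [Sym2.isDiag_iff_proj_eq]; exact hab⟩).isLt
        omega
      rw [hempty]
      simp only [Finset.card_empty, Nat.cast_zero, zero_div]
      exact Finset.sum_nonneg fun j _ => by positivity
  refine ⟨key, ?_⟩
  exact squeeze_zero (fun N => div_nonneg (Nat.cast_nonneg _) (Nat.cast_nonneg _)) key
    (bound_tendsto f hdiv)
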